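/- Let n ≥ 1, 1 ≤ k ≤ n−1, and 1 ≤ s ≤ n−2 with gcd(n, s) = 1. Then there exists an s-overlap cycle of all binary words of length n with exactly k ones: there is a function f : ZMod (C(n,k)·(n−s)) → Bool such that the map sending each t ∈ Fin C(n,k) to the word (j : Fin n) ↦ f(t·(n−s) + j) is a bijection from Fin C(n,k) onto the set of words w : Fin n → Bool with exactly k coordinates equal to true. -/

import Mathlib

/-- The number of coordinates of a binary word that are `true`. -/
def weight {n : ℕ} (w : Fin n → Bool) : ℕ :=
  (Finset.univ.filter fun i => w i = true).card


open Equiv Equiv.Perm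

section Euler
variable {E : Type*} [Fintype E] [DecidableEq E] {V : Type*} [DecidableEq V]

private lemma merge_aux (σ : Perm E) {x y : E} (h : ¬ σ.SameCycle x y) :
    ∀ a, σ.SameCycle x a ∨ σ.SameCycle y a →
      ((σ * Equiv.swap x y).SameCycle x a ∨ (σ * Equiv.swap x y).SameCycle y a) := by
  set σ' := σ * Equiv.swap x y with hσ'
  have hxy : x ≠ y := fun hxy => h (hxy ▸ Equiv.Perm.SameCycle.refl σ x)
  have hx' : σ' x = σ y := by simp [hσ', Equiv.swap_apply_left]
  have hy' : σ' y = σ x := by simp [hσ', Equiv.swap_apply_right]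
  have hother : ∀ a, a ≠ x → a ≠ y → σ' a = σ a := by
    intro a h1 h2; simp [hσ', Equiv.swap_apply_of_ne_of_ne h1 h2]
  -- Q preserved under σ
  have step : ∀ a, (σ'.SameCycle x a ∨ σ'.SameCycle y a) →
      (σ'.SameCycle x (σ a) ∨ σ'.SameCycle y (σ a)) := by
    intro a ha
    by_cases h1 : a = x
    · subst h1
      right
      have : σ a = σ' y := hy'.symm
      rw [this]
      exact (Equiv.Perm.sameCycle_apply_right).2 (Equiv.Perm.SameCycle.refl _ _)
    by_cases h2 : a = y
    · subst h2
      left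
      have : σ a = σ' x := hx'.symm
      rw [this]
      exact (Equiv.Perm.sameCycle_apply_right).2 (Equiv.Perm.SameCycle.refl _ _)
    · have : σ a = σ' a := (hother a h1 h2).symm
      rw [this]
      rcases ha with ha | ha
      · exact Or.inl ((Equiv.Perm.sameCycle_apply_right).2 ha)
      · exact Or.inr ((Equiv.Perm.sameCycle_apply_right).2 ha)
  have iter : ∀ (i : ℕ) (b : E), (σ'.SameCycle x b ∨ σ'.SameCycle y b) →
      (σ'.SameCycle x ((σ ^ i) b) ∨ σ'.SameCycle y ((σ ^ i) b)) := by
    intro i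
    induction i with
    | zero => intro b hb; simpa using hb
    | succ i ih =>
      intro b hb
      have : (σ ^ (i+1)) b = σ ((σ ^ i) b) := by
        rw [pow_succ']; rfl
      rw [this]
      exact step _ (ih b hb)
  intro a ha
  rcases ha with ha | ha
  · obtain ⟨i, _, rfl⟩ := ha.exists_pow_eq'
    exact iter i x (Or.inl (Equiv.Perm.SameCycle.refl _ _))
  · obtain ⟨i, _, rfl⟩ := ha.exists_pow_eq'
    exact iter i y (Or.inr (Equiv.Perm.SameCycle.refl _ _))

private lemma merge_cycle (σ : Perm E) {x y : E} (h : ¬ σ.SameCycle x y) :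
    (σ * Equiv.swap x y).SameCycle x y := by
  set σ' := σ * Equiv.swap x y with hσ'
  have hxy : x ≠ y := fun hxy => h (hxy ▸ Equiv.Perm.SameCycle.refl σ x)
  have hx' : σ' x = σ y := by simp [hσ', Equiv.swap_apply_left]
  have hother : ∀ a, a ≠ x → a ≠ y → σ' a = σ a := by
    intro a h1 h2; simp [hσ', Equiv.swap_apply_of_ne_of_ne h1 h2]
  -- q := minimal positive period of y under σ
  have hex : ∃ q, 0 < q ∧ (σ ^ q) y = y := by
    refine ⟨orderOf σ, orderOf_pos σ, by simp [pow_orderOf_eq_one]⟩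
  classical
  let q := Nat.find hex
  have hq : 0 < q ∧ (σ ^ q) y = y := Nat.find_spec hex
  have hmin : ∀ i, 0 < i → i < q → (σ ^ i) y ≠ y := by
    intro i hi hiq hcon
    exact Nat.find_min hex hiq ⟨hi, hcon⟩
  have hne_x : ∀ i : ℕ, (σ ^ i) y ≠ x := by
    intro i hcon
    exact h (Equiv.Perm.SameCycle.symm ⟨(i : ℤ), by simpa using hcon⟩)
  have claim : ∀ i, 0 < i → i < q → (σ' ^ i) x = (σ ^ i) y := by
    intro i
    induction i with
    | zero => omega
    | succ i ih =>
      intro _ hiq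
      rcases Nat.eq_zero_or_pos i with h0 | hipos
      · subst h0; simpa using hx'
      · have hi' : (σ' ^ i) x = (σ ^ i) y := ih hipos (by omega)
        have h1 : (σ' ^ (i+1)) x = σ' ((σ' ^ i) x) := by rw [pow_succ']; rfl
        have h2 : (σ ^ (i+1)) y = σ ((σ ^ i) y) := by rw [pow_succ']; rfl
        rw [h1, h2, hi']
        exact hother _ (hne_x i) (hmin i hipos (by omega))
  have final : (σ' ^ q) x = y := by
    rcases Nat.lt_or_ge 1 q with hq2 | hq1
    · have h1 : (σ' ^ q) x = σ' ((σ' ^ (q-1)) x) := by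
        conv_lhs => rw [show q = (q-1) + 1 by omega]
        rw [pow_succ']; rfl
      rw [h1, claim (q-1) (by omega) (by omega),
        hother _ (hne_x _) (hmin _ (by omega) (by omega))]
      have : σ ((σ ^ (q-1)) y) = (σ ^ q) y := by
        conv_rhs => rw [show q = (q-1) + 1 by omega]
        rw [pow_succ']; rfl
      rw [this, hq.2]
    · have : q = 1 := by omega
      rw [this]
      simp only [pow_one]
      rw [hx']
      have : q = 1 := this
      have := hq.2
      rwa [‹q = 1›, pow_one] at this
  exact ⟨(q : ℤ), by simpa using final⟩

end Euler

section Euler2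
variable {E : Type*} [Fintype E] [DecidableEq E] {V : Type*} [DecidableEq V]

private lemma exists_cyclic_perm (src dst : E → V) (ρ : Perm E)
    (hρ : ∀ e, src (ρ e) = dst e)
    (conn : ∀ a b : E, Relation.ReflTransGen
       (fun u v : E => src u = src v ∨ src u = dst v ∨ dst u = src v ∨ dst u = dst v) a b)
    (e₀ : E) :
    ∃ π : Perm E, (∀ e, src (π e) = dst e) ∧ ∀ a, π.SameCycle e₀ a := by
  classical
  let S : Finset (Perm E) := Finset.univ.filter (fun π => ∀ e, src (π e) = dst e)
  have hSne : S.Nonempty := ⟨ρ, by simp [S, hρ]⟩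
  obtain ⟨π, hπS, hmax⟩ := S.exists_max_image
    (fun π => (Finset.univ.filter (fun a => π.SameCycle e₀ a)).card) hSne
  have hπ : ∀ e, src (π e) = dst e := by
    have := hπS; simp only [S, Finset.mem_filter] at this; exact this.2
  refine ⟨π, hπ, ?_⟩
  by_contra hcon
  push_neg at hcon
  obtain ⟨z, hz⟩ := hcon
  -- find a crossing pair along the connectivity chain
  have cross : ∃ u v, π.SameCycle e₀ u ∧ ¬ π.SameCycle e₀ v ∧
      (src u = src v ∨ src u = dst v ∨ dst u = src v ∨ dst u = dst v) := by
    have hchain := conn e₀ z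
    clear hmax
    revert hz
    induction hchain with
    | refl => intro hz; exact absurd (Equiv.Perm.SameCycle.refl _ _) hz
    | @tail b c hab hbc ih =>
      intro hz
      by_cases hPb : π.SameCycle e₀ b
      · exact ⟨b, c, hPb, hz, hbc⟩
      · exact ih hPb
  obtain ⟨u, v, hu, hv, hshare⟩ := cross
  -- produce x,y with dst x = dst y, x in the class of e₀, y not
  have hKinv : ∀ a, π.SameCycle e₀ a → π.SameCycle e₀ (π⁻¹ a) := by
    intro a ha; exact (Equiv.Perm.sameCycle_symm_apply_right).2 ha
  have hKinv' : ∀ a, ¬ π.SameCycle e₀ a → ¬ π.SameCycle e₀ (π⁻¹ a) := by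
    intro a ha hc; exact ha ((Equiv.Perm.sameCycle_symm_apply_right).1 hc)
  have hdst : ∀ a, dst (π⁻¹ a) = src a := by
    intro a
    have h := hπ (π⁻¹ a)
    rw [show π (π⁻¹ a) = a from π.apply_symm_apply a] at h
    exact h.symm
  have key : ∃ x y, π.SameCycle e₀ x ∧ ¬ π.SameCycle e₀ y ∧ dst x = dst y := by
    rcases hshare with hs | hs | hs | hs
    · exact ⟨π⁻¹ u, π⁻¹ v, hKinv u hu, hKinv' v hv, by rw [hdst, hdst, hs]⟩
    · exact ⟨π⁻¹ u, v, hKinv u hu, hv, by rw [hdst, hs]⟩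
    · exact ⟨u, π⁻¹ v, hu, hKinv' v hv, by rw [hdst, hs]⟩
    · exact ⟨u, v, hu, hv, hs⟩
  obtain ⟨x, y, hx, hy, hd⟩ := key
  have hnxy : ¬ π.SameCycle x y := fun hc => hy (hx.trans hc)
  set π' := π * Equiv.swap x y with hπ'def
  have hπ'S : π' ∈ S := by
    simp only [S, Finset.mem_filter, Finset.mem_univ, true_and]
    intro a
    by_cases h1 : a = x
    · have : π' a = π y := by rw [hπ'def, Equiv.Perm.mul_apply, h1, Equiv.swap_apply_left]
      rw [this, hπ, ← hd, h1]
    by_cases h2 : a = y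
    · have : π' a = π x := by rw [hπ'def, Equiv.Perm.mul_apply, h2, Equiv.swap_apply_right]
      rw [this, hπ, hd, h2]
    · have : π' a = π a := by rw [hπ'def, Equiv.Perm.mul_apply, Equiv.swap_apply_of_ne_of_ne h1 h2]
      rw [this, hπ]
  -- the class of e₀ strictly grows
  have hxy' : π'.SameCycle x y := merge_cycle π hnxy
  have hgrow : ∀ a, π.SameCycle e₀ a → π'.SameCycle e₀ a := by
    intro a ha
    have h1 := merge_aux π hnxy a (Or.inl ((hx.symm).trans ha))
    have h2 := merge_aux π hnxy e₀ (Or.inl hx.symm)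
    have hcol : ∀ b, (π'.SameCycle x b ∨ π'.SameCycle y b) → π'.SameCycle x b := by
      intro b hb
      rcases hb with hb | hb
      · exact hb
      · exact hxy'.trans hb
    exact (hcol e₀ h2).symm.trans (hcol a h1)
  have hy' : π'.SameCycle e₀ y := by
    have h2 := merge_aux π hnxy e₀ (Or.inl hx.symm)
    have : π'.SameCycle x e₀ := by
      rcases h2 with h2 | h2
      · exact h2
      · exact hxy'.trans h2
    exact this.symm.trans hxy'
  have hss : (Finset.univ.filter (fun a => π.SameCycle e₀ a)) ⊂
      (Finset.univ.filter (fun a => π'.SameCycle e₀ a)) := by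
    refine Finset.ssubset_iff_of_subset ?_ |>.2 ?_
    · intro a ha
      simp only [Finset.mem_filter, Finset.mem_univ, true_and] at ha ⊢
      exact hgrow a ha
    · exact ⟨y, by simp [hy'], by simp [hy]⟩
  have := hmax π' hπ'S
  have := Finset.card_lt_card hss
  omega

private lemma exists_G (src dst : E → V) (ρ : Perm E)
    (hρ : ∀ e, src (ρ e) = dst e)
    (conn : ∀ a b : E, Relation.ReflTransGen
       (fun u v : E => src u = src v ∨ src u = dst v ∨ dst u = src v ∨ dst u = dst v) a b)
    (hcard : 2 ≤ Fintype.card E) :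
    ∃ G : ℕ → E, (∀ a, dst (G a) = src (G (a+1))) ∧
      (∀ a, G (a % Fintype.card E) = G a) ∧
      (∀ a b, a < Fintype.card E → b < Fintype.card E → G a = G b → a = b) ∧
      (∀ e, ∃ a, a < Fintype.card E ∧ G a = e) := by
  classical
  have hne : Nonempty E := Fintype.card_pos_iff.1 (by omega)
  obtain ⟨e₀⟩ := hne
  obtain ⟨π, hπ, hsc⟩ := exists_cyclic_perm src dst ρ hρ conn e₀
  -- π has no fixed points
  have hnofix : ∀ z, π z ≠ z := by
    intro z hfix
    obtain ⟨w, hw⟩ := Fintype.exists_ne_of_one_lt_card (by omega) z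
    have h1 : π.SameCycle z w := (hsc z).symm.trans (hsc w)
    obtain ⟨i, hi⟩ := h1
    have : (π ^ i) z = z := Equiv.Perm.zpow_apply_eq_self_of_apply_eq_self hfix i
    rw [this] at hi
    exact hw hi.symm
  have hcycle : π.IsCycle := by
    exact ⟨e₀, hnofix e₀, fun y _ => (hsc e₀).symm.trans (hsc y)⟩
  have hsupp : π.support = Finset.univ := by
    apply Finset.eq_univ_iff_forall.2
    intro x
    simp [Equiv.Perm.mem_support, hnofix x]
  have horder : orderOf π = Fintype.card E := by
    rw [hcycle.orderOf, hsupp, Finset.card_univ]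
  have inj : ∀ a b, a < Fintype.card E → b < Fintype.card E → (π ^ a) e₀ = (π ^ b) e₀ → a = b := by
    intro a b ha hb hab
    by_contra hne
    wlog h : a < b generalizing a b
    · exact this b a hb ha hab.symm (fun hc => hne hc.symm) (by omega)
    have h1 : (π ^ a) ((π ^ (b - a)) e₀) = (π ^ a) e₀ := by
      rw [← Equiv.Perm.mul_apply, ← pow_add, show a + (b - a) = b by omega, hab]
    have h2 : (π ^ (b - a)) e₀ = e₀ := (π ^ a).injective h1
    have h3 : π ^ (b - a) = 1 := hcycle.pow_eq_one_iff.2 ⟨e₀, hnofix e₀, h2⟩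
    have h4 := orderOf_dvd_of_pow_eq_one h3
    rw [horder] at h4
    have := Nat.le_of_dvd (by omega) h4
    omega
  refine ⟨fun a => (π ^ a) e₀, ?_, ?_, inj, ?_⟩
  · intro a
    show dst ((π ^ a) e₀) = src ((π ^ (a+1)) e₀)
    have : (π ^ (a+1)) e₀ = π ((π ^ a) e₀) := by rw [pow_succ']; rfl
    rw [this, hπ]
  · intro a
    show (π ^ (a % Fintype.card E)) e₀ = (π ^ a) e₀
    conv_rhs => rw [← pow_mod_orderOf]
    rw [horder]
  · intro e
    obtain ⟨i, hilt, hi⟩ := (hsc e).exists_pow_eq'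
    rw [horder] at hilt
    exact ⟨i, hilt, hi⟩

end Euler2


section Rot
variable {n : ℕ} [NeZero n]
open Fin.NatCast

def rotN (r : ℕ) (w : Fin n → Bool) : Fin n → Bool := fun j => w (j + (r : Fin n))

lemma rotN_apply (r : ℕ) (w : Fin n → Bool) (j : Fin n) :
    rotN r w j = w ⟨(j.val + r) % n, Nat.mod_lt _ (Nat.pos_of_ne_zero (NeZero.ne n))⟩ := by
  unfold rotN
  congr 1
  ext
  simp [Fin.add_def, Fin.val_natCast, Nat.add_mod_right, Nat.add_mod]

lemma rotN_rotN (a b : ℕ) (w : Fin n → Bool) : rotN a (rotN b w) = rotN (b + a) w := by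
  funext j
  unfold rotN
  rw [Nat.cast_add, ← add_assoc]
  simp only [add_assoc, add_comm, add_left_comm]

lemma rotN_mod (r : ℕ) (w : Fin n → Bool) : rotN (r % n) w = rotN r w := by
  funext j
  unfold rotN
  congr 2
  ext
  simp [Fin.val_natCast]

lemma rotN_n (w : Fin n → Bool) : rotN n w = w := by
  funext j
  unfold rotN
  simp

omit [NeZero n] in
lemma weight_comp_equiv (e : Fin n ≃ Fin n) (w : Fin n → Bool) :
    weight (fun j => w (e j)) = weight w := by
  unfold weight
  rw [← Fintype.card_subtype, ← Fintype.card_subtype]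
  exact Fintype.card_congr (e.subtypeEquiv (fun a => Iff.rfl))

lemma weight_rotN (r : ℕ) (w : Fin n → Bool) : weight (rotN r w) = weight w :=
  weight_comp_equiv (Equiv.addRight ((r : Fin n))) w

end Rot

section Inst
variable {n : ℕ}

-- cardinality of weight-k words
lemma card_weight_eq (n k : ℕ) :
    Fintype.card {w : Fin n → Bool // weight w = k} = n.choose k := by
  classical
  have e : {w : Fin n → Bool // weight w = k} ≃ {s : Finset (Fin n) // s.card = k} := by
    refine ⟨fun w => ⟨Finset.univ.filter (fun i => w.1 i = true), w.2⟩,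
      fun s => ⟨fun i => decide (i ∈ s.1), ?_⟩, ?_, ?_⟩
    · have : (Finset.univ.filter fun i => decide (i ∈ s.1) = true) = s.1 := by
        ext i; simp
      unfold weight
      rw [this, s.2]
    · intro w
      ext i
      simp
    · intro s
      ext i
      simp
  rw [Fintype.card_congr e]
  rw [Fintype.card_finset_len, Fintype.card_fin]

lemma card_filter_val_lt (n c : ℕ) (hc : c ≤ n) :
    (Finset.univ.filter (fun i : Fin n => i.val < c)).card = c := by
  classical
  have : (Finset.univ.filter (fun i : Fin n => i.val < c)) =
      (Finset.range c).attachFin (fun m hm => lt_of_lt_of_le (Finset.mem_range.1 hm) hc) := by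
    ext i
    simp [Finset.mem_attachFin]
  rw [this, Finset.card_attachFin, Finset.card_range]

end Inst

section Words
variable {n : ℕ}

private lemma weight_wstar (k : ℕ) (hk : k ≤ n) :
    weight (fun i : Fin n => decide (i.val < k)) = k := by
  unfold weight
  have : (Finset.univ.filter fun i : Fin n => decide (i.val < k) = true) =
      (Finset.univ.filter fun i : Fin n => i.val < k) := by
    ext i; simp
  rw [this, card_filter_val_lt n k hk]

private lemma swap_filter (w : Fin n → Bool) (i₁ i₂ : Fin n)
    (h1 : w i₁ = false) (h2 : w i₂ = true) :
    (Finset.univ.filter (fun j => w (Equiv.swap i₁ i₂ j) = true)) =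
      insert i₁ ((Finset.univ.filter (fun j => w j = true)).erase i₂) := by
  have hne : i₁ ≠ i₂ := fun h => by rw [h, h2] at h1; simp at h1
  ext j
  simp only [Finset.mem_filter, Finset.mem_univ, true_and, Finset.mem_insert, Finset.mem_erase]
  by_cases hj1 : j = i₁
  · subst hj1
    simp [Equiv.swap_apply_left, h2]
  by_cases hj2 : j = i₂
  · subst hj2
    simp [Equiv.swap_apply_right, h1, Ne.symm hne, hj1]
  · rw [Equiv.swap_apply_of_ne_of_ne hj1 hj2]
    simp [hj1, hj2]

private lemma no_descent_eq_wstar (k : ℕ) (hk : k ≤ n) (w : Fin n → Bool)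
    (hw : weight w = k)
    (hnd : ∀ p (h : p + 1 < n), ¬(w ⟨p, by omega⟩ = false ∧ w ⟨p+1, h⟩ = true)) :
    w = fun i : Fin n => decide (i.val < k) := by
  classical
  have mono : ∀ d j (hj : j + d < n), w ⟨j + d, hj⟩ = true → w ⟨j, by omega⟩ = true := by
    intro d
    induction d with
    | zero => intro j hj h; exact h
    | succ d ih =>
      intro j hj h
      have hd : w ⟨j + d, by omega⟩ = true := by
        have := hnd (j + d) (by omega)
        by_contra hc
        have : w ⟨j + d, by omega⟩ = false := by
          cases hx : w ⟨j + d, by omega⟩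
          · rfl
          · exact absurd hx hc
        exact hnd (j + d) (by omega) ⟨this, h⟩
      exact ih j (by omega) hd
  have mono' : ∀ (i j : Fin n), i.val ≤ j.val → w j = true → w i = true := by
    intro i j hij h
    have : j = ⟨i.val + (j.val - i.val), by omega⟩ := by ext; simp; omega
    rw [this] at h
    have := mono (j.val - i.val) i.val (by omega) h
    simpa using this
  funext i
  by_cases hik : i.val < k
  · rw [decide_eq_true hik]
    by_contra hc
    have hfalse : w i = false := by
      cases hx : w i
      · rfl
      · exact absurd hx hc
    -- all j ≥ i are false, so filter ⊆ {j | j.val < i.val}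
    have hsub : (Finset.univ.filter (fun j => w j = true)) ⊆
        (Finset.univ.filter (fun j : Fin n => j.val < i.val)) := by
      intro j hj
      simp only [Finset.mem_filter, Finset.mem_univ, true_and] at hj ⊢
      by_contra hge
      push_neg at hge
      have := mono' i j hge hj
      rw [hfalse] at this
      exact Bool.false_ne_true this
    have hcard := Finset.card_le_card hsub
    rw [card_filter_val_lt n i.val (le_of_lt i.isLt)] at hcard
    unfold weight at hw
    omega
  · rw [decide_eq_false hik]
    by_contra hc
    have htrue : w i = true := by
      cases hx : w i
      · exact absurd hx hc
      · rfl
    have hsub : (Finset.univ.filter (fun j : Fin n => j.val < i.val + 1)) ⊆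
        (Finset.univ.filter (fun j => w j = true)) := by
      intro j hj
      simp only [Finset.mem_filter, Finset.mem_univ, true_and] at hj ⊢
      exact mono' j i (by omega) htrue
    have hcard := Finset.card_le_card hsub
    rw [card_filter_val_lt n (i.val + 1) (by omega)] at hcard
    unfold weight at hw
    omega

private def Phi (w : Fin n → Bool) : ℕ := ∑ i ∈ Finset.univ.filter (fun j => w j = true), i.val

private lemma phi_swap_lt (w : Fin n → Bool) (p : ℕ) (hp : p + 1 < n)
    (h1 : w ⟨p, by omega⟩ = false) (h2 : w ⟨p+1, hp⟩ = true) :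
    Phi (fun j => w (Equiv.swap ⟨p, by omega⟩ ⟨p+1, hp⟩ j)) < Phi w := by
  classical
  unfold Phi
  rw [swap_filter w _ _ h1 h2]
  have hmem : (⟨p+1, hp⟩ : Fin n) ∈ Finset.univ.filter (fun j => w j = true) := by
    simp [h2]
  have hnotmem : (⟨p, by omega⟩ : Fin n) ∉
      (Finset.univ.filter (fun j => w j = true)).erase ⟨p+1, hp⟩ := by
    simp [h1]
  rw [Finset.sum_insert hnotmem]
  have herase : ∑ i ∈ (Finset.univ.filter (fun j => w j = true)).erase ⟨p+1, hp⟩, i.val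
      = (∑ i ∈ Finset.univ.filter (fun j => w j = true), i.val) - (p+1) := by
    rw [← Finset.add_sum_erase _ _ hmem]
    simp
  rw [herase]
  have hle : p + 1 ≤ ∑ i ∈ Finset.univ.filter (fun j => w j = true), i.val := by
    calc p + 1 = (⟨p+1, hp⟩ : Fin n).val := rfl
    _ ≤ _ := Finset.single_le_sum (fun i _ => Nat.zero_le i.val) hmem
  simp only [Fin.val_mk]
  omega

end Words

section Main

lemma rotN_zero {n : ℕ} [NeZero n] (w : Fin n → Bool) : rotN 0 w = w := by
  funext j
  unfold rotN
  simp

abbrev WordE (n k : ℕ) := {w : Fin n → Bool // weight w = k}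

private def srcF (n k s : ℕ) (hsn : s ≤ n) : WordE n k → (Fin s → Bool) :=
  fun w i => w.1 ⟨i.val, lt_of_lt_of_le i.isLt hsn⟩

private def dstF (n k s : ℕ) (_hsn : s ≤ n) : WordE n k → (Fin s → Bool) :=
  fun w i => w.1 ⟨(n - s) + i.val, by omega⟩

private def rotE (n k : ℕ) [NeZero n] (r : ℕ) : WordE n k → WordE n k :=
  fun w => ⟨rotN r w.1, by rw [weight_rotN]; exact w.2⟩

private lemma rotE_rotE (n k : ℕ) [NeZero n] (a b : ℕ) (w : WordE n k) :
    rotE n k a (rotE n k b w) = rotE n k (b + a) w :=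
  Subtype.ext (rotN_rotN a b w.1)

private lemma rotE_n (n k : ℕ) [NeZero n] (w : WordE n k) : rotE n k n w = w :=
  Subtype.ext (rotN_n w.1)

private lemma exists_word_cycle (n k s : ℕ) (hn2 : 2 ≤ n) (hk1 : 1 ≤ k) (hkn : k < n)
    (hs1 : 1 ≤ s) (hsn2 : s + 2 ≤ n) (hgcd : Nat.gcd n s = 1) :
    ∃ G : ℕ → (Fin n → Bool),
      (∀ a, weight (G a) = k) ∧
      (∀ a i (hi : i < s), G a ⟨(n - s) + i, by omega⟩ = G (a+1) ⟨i, by omega⟩) ∧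
      (∀ a, G (a % n.choose k) = G a) ∧
      (∀ a b, a < n.choose k → b < n.choose k → G a = G b → a = b) ∧
      (∀ w, weight w = k → ∃ a, a < n.choose k ∧ G a = w) := by
  classical
  haveI : NeZero n := ⟨by omega⟩
  have npos : 0 < n := by omega
  have hsn : s ≤ n := by omega
  set src := srcF n k s hsn with hsrc_def
  set dst := dstF n k s hsn with hdst_def
  -- the rotation permutation
  let ρ : Equiv.Perm (WordE n k) :=
    ⟨rotE n k (n - s), rotE n k s,
     fun w => by rw [rotE_rotE, show (n - s) + s = n by omega, rotE_n],
     fun w => by rw [rotE_rotE, show s + (n - s) = n by omega, rotE_n]⟩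
  have hρ : ∀ w, src (ρ w) = dst w := by
    intro w
    funext i
    show (rotE n k (n - s) w).1 ⟨i.val, _⟩ = w.1 ⟨(n - s) + i.val, _⟩
    show rotN (n - s) w.1 ⟨i.val, _⟩ = w.1 ⟨(n - s) + i.val, _⟩
    rw [rotN_apply]
    refine congrArg w.1 ?_
    apply Fin.ext
    simp only [Fin.val_mk]
    rw [Nat.mod_eq_of_lt (by omega)]
    omega
  -- connectivity
  set Sh : WordE n k → WordE n k → Prop :=
    fun u v => src u = src v ∨ src u = dst v ∨ dst u = src v ∨ dst u = dst v with hSh_def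
  have hSh_symm : Symmetric Sh := by
    intro u v h
    rcases h with h | h | h | h
    · exact Or.inl h.symm
    · exact Or.inr (Or.inr (Or.inl h.symm))
    · exact Or.inr (Or.inl h.symm)
    · exact Or.inr (Or.inr (Or.inr h.symm))
  have hR_symm : ∀ {u v : WordE n k}, Relation.ReflTransGen Sh u v → Relation.ReflTransGen Sh v u :=
    fun h => (@Relation.ReflTransGen.stdSymm _ Sh ⟨fun _ _ h => hSh_symm h⟩).symm _ _ h
  have step1 : ∀ w : WordE n k, Relation.ReflTransGen Sh w (rotE n k (n - s) w) := by
    intro w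
    apply Relation.ReflTransGen.single
    exact Or.inr (Or.inr (Or.inl (hρ w).symm))
  have step2 : ∀ t (w : WordE n k), Relation.ReflTransGen Sh w (rotE n k (t * (n - s)) w) := by
    intro t
    induction t with
    | zero =>
      intro w
      have : rotE n k (0 * (n - s)) w = w := by
        apply Subtype.ext
        show rotN (0 * (n-s)) w.1 = w.1
        rw [Nat.zero_mul, rotN_zero]
      rw [this]
    | succ t ih =>
      intro w
      have h1 := (ih w).trans (step1 (rotE n k (t * (n - s)) w))
      rw [rotE_rotE, show t * (n - s) + (n - s) = (t+1) * (n-s) by ring] at h1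
      exact h1
  have hcop : Nat.Coprime (n - s) n := by
    have hd : Nat.gcd (n - s) n ∣ 1 := by
      rw [← hgcd]
      apply Nat.dvd_gcd (Nat.gcd_dvd_right _ _)
      have h1 : Nat.gcd (n - s) n ∣ n - s := Nat.gcd_dvd_left _ _
      have h2 : Nat.gcd (n - s) n ∣ n := Nat.gcd_dvd_right _ _
      have := Nat.dvd_sub h2 h1
      rwa [show n - (n - s) = s by omega] at this
    exact Nat.dvd_one.mp hd
  have step3 : ∀ r (w : WordE n k), Relation.ReflTransGen Sh w (rotE n k r w) := by
    intro r w
    -- find t with t * (n-s) ≡ r [MOD n]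
    have hunit : IsUnit ((n - s : ℕ) : ZMod n) := by
      rw [ZMod.isUnit_iff_coprime]
      exact hcop
    obtain ⟨u, hu⟩ := hunit
    set t := (((u⁻¹ : (ZMod n)ˣ) : ZMod n) * (r : ZMod n)).val with ht_def
    have hcast : ((t * (n - s) : ℕ) : ZMod n) = ((r : ℕ) : ZMod n) := by
      push_cast
      rw [ht_def]
      rw [ZMod.natCast_val, ZMod.cast_id]
      rw [mul_comm, ← mul_assoc, ← hu, Units.mul_inv, one_mul]
    have hmodeq : t * (n - s) ≡ r [MOD n] := (ZMod.natCast_eq_natCast_iff _ _ _).1 hcast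
    have heq : rotE n k (t * (n - s)) w = rotE n k r w := by
      apply Subtype.ext
      show rotN (t * (n-s)) w.1 = rotN r w.1
      rw [← rotN_mod (t * (n-s)), ← rotN_mod r, hmodeq]
    rw [← heq]
    exact step2 t w
  -- single adjacent swap step
  have step4 : ∀ (w : WordE n k) (p : ℕ) (hp : p + 1 < n)
      (h1 : w.1 ⟨p, Nat.lt_of_succ_lt hp⟩ = false) (h2 : w.1 ⟨p+1, hp⟩ = true),
      Relation.ReflTransGen Sh w
        ⟨fun j => w.1 (Equiv.swap ⟨p, Nat.lt_of_succ_lt hp⟩ ⟨p+1, hp⟩ j),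
         by rw [weight_comp_equiv (Equiv.swap ⟨p, Nat.lt_of_succ_lt hp⟩ ⟨p+1, hp⟩) w.1]; exact w.2⟩ := by
    intro w p hp h1 h2
    have hkey : src (rotE n k (p+2) w) = src (rotE n k (p+2)
        ⟨fun j => w.1 (Equiv.swap ⟨p, Nat.lt_of_succ_lt hp⟩ ⟨p+1, hp⟩ j),
         by rw [weight_comp_equiv (Equiv.swap ⟨p, Nat.lt_of_succ_lt hp⟩ ⟨p+1, hp⟩) w.1]; exact w.2⟩) := by
      funext i
      have hX1 : (i.val + (p+2)) % n ≠ p := by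
        intro hval
        have hmeq : i.val + 2 + p ≡ 0 + p [MOD n] := by
          show (i.val + 2 + p) % n = (0 + p) % n
          rw [show i.val + 2 + p = i.val + (p+2) by omega, hval, Nat.zero_add,
            Nat.mod_eq_of_lt (by omega)]
        have hdvd : n ∣ i.val + 2 := (Nat.modEq_zero_iff_dvd).1 (hmeq.add_right_cancel' p)
        have := Nat.le_of_dvd (by omega) hdvd
        have := i.isLt
        omega
      have hX2 : (i.val + (p+2)) % n ≠ p + 1 := by
        intro hval
        have hmeq : i.val + 1 + (p + 1) ≡ 0 + (p + 1) [MOD n] := by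
          show (i.val + 1 + (p+1)) % n = (0 + (p+1)) % n
          rw [show i.val + 1 + (p+1) = i.val + (p+2) by omega, hval, Nat.zero_add,
            Nat.mod_eq_of_lt (by omega)]
        have hdvd : n ∣ i.val + 1 := (Nat.modEq_zero_iff_dvd).1 (hmeq.add_right_cancel' (p+1))
        have := Nat.le_of_dvd (by omega) hdvd
        have := i.isLt
        omega
      have hswap : ∀ (x : Fin n), x.val ≠ p → x.val ≠ p + 1 →
          (Equiv.swap (⟨p, Nat.lt_of_succ_lt hp⟩ : Fin n) ⟨p+1, hp⟩) x = x := by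
        intro x hx1 hx2
        apply Equiv.swap_apply_of_ne_of_ne
        · intro h; exact hx1 (congrArg Fin.val h)
        · intro h; exact hx2 (congrArg Fin.val h)
      show rotN (p+2) w.1 ⟨i.val, lt_of_lt_of_le i.isLt hsn⟩
        = rotN (p+2) (fun j => w.1 (Equiv.swap ⟨p, Nat.lt_of_succ_lt hp⟩ ⟨p+1, hp⟩ j))
            ⟨i.val, lt_of_lt_of_le i.isLt hsn⟩
      rw [rotN_apply, rotN_apply]
      exact (congrArg w.1 (hswap ⟨(i.val + (p+2)) % n,
        Nat.mod_lt _ (Nat.pos_of_ne_zero (NeZero.ne n))⟩ hX1 hX2)).symm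
    have hstep : Sh (rotE n k (p+2) w) (rotE n k (p+2)
        ⟨fun j => w.1 (Equiv.swap ⟨p, Nat.lt_of_succ_lt hp⟩ ⟨p+1, hp⟩ j),
         by rw [weight_comp_equiv (Equiv.swap ⟨p, Nat.lt_of_succ_lt hp⟩ ⟨p+1, hp⟩) w.1]; exact w.2⟩) := Or.inl hkey
    exact ((step3 (p+2) w).trans (Relation.ReflTransGen.single hstep)).trans
      (hR_symm (step3 (p+2) _))
  -- connect everything to the canonical word
  have hwstar : weight (fun i : Fin n => decide (i.val < k)) = k := weight_wstar k (le_of_lt hkn)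
  have step5 : ∀ w : WordE n k,
      Relation.ReflTransGen Sh w ⟨fun i : Fin n => decide (i.val < k), hwstar⟩ := by
    have main : ∀ N (w : WordE n k), Phi w.1 ≤ N →
        Relation.ReflTransGen Sh w ⟨fun i : Fin n => decide (i.val < k), hwstar⟩ := by
      intro N
      induction N with
      | zero =>
        intro w hN
        by_cases hw : w.1 = fun i : Fin n => decide (i.val < k)
        · rw [show w = ⟨fun i : Fin n => decide (i.val < k), hwstar⟩ from Subtype.ext hw]
        · have hex : ¬ (∀ p (h : p+1 < n),
              ¬(w.1 ⟨p, by omega⟩ = false ∧ w.1 ⟨p+1, h⟩ = true)) :=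
            fun hnd => hw (no_descent_eq_wstar k (le_of_lt hkn) w.1 w.2 hnd)
          push_neg at hex
          obtain ⟨p, hp, hfa, htr⟩ := hex
          have hlt := phi_swap_lt w.1 p hp hfa htr
          exact absurd (lt_of_lt_of_le hlt hN) (Nat.not_lt_zero _)
      | succ N ih =>
        intro w hN
        by_cases hw : w.1 = fun i : Fin n => decide (i.val < k)
        · rw [show w = ⟨fun i : Fin n => decide (i.val < k), hwstar⟩ from Subtype.ext hw]
        · have hex : ¬ (∀ p (h : p+1 < n),
              ¬(w.1 ⟨p, by omega⟩ = false ∧ w.1 ⟨p+1, h⟩ = true)) :=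
            fun hnd => hw (no_descent_eq_wstar k (le_of_lt hkn) w.1 w.2 hnd)
          push_neg at hex
          obtain ⟨p, hp, hfa, htr⟩ := hex
          have hlt := phi_swap_lt w.1 p hp hfa htr
          exact (step4 w p hp hfa htr).trans
            (ih _ (Nat.lt_succ_iff.mp (lt_of_lt_of_le hlt hN)))
    exact fun w => main (Phi w.1) w le_rfl
  have conn : ∀ a b : WordE n k, Relation.ReflTransGen Sh a b :=
    fun a b => (step5 a).trans (hR_symm (step5 b))
  -- at least two words
  have hcard2 : 2 ≤ Fintype.card (WordE n k) := by
    have h2 : (1 : ℕ) < Fintype.card (WordE n k) := by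
      rw [Fintype.one_lt_card_iff]
      refine ⟨⟨fun i : Fin n => decide (i.val < k), hwstar⟩,
        rotE n k 1 ⟨fun i : Fin n => decide (i.val < k), hwstar⟩, ?_⟩
      intro hcon
      have hval := congrFun (congrArg Subtype.val hcon) ⟨n - 1, by omega⟩
      rw [show ((rotE n k 1 ⟨fun i : Fin n => decide (i.val < k), hwstar⟩).1 ⟨n-1, by omega⟩)
        = rotN 1 (fun i : Fin n => decide (i.val < k)) ⟨n-1, by omega⟩ from rfl,
        rotN_apply] at hval
      simp only [Fin.val_mk, show n - 1 + 1 = n by omega, Nat.mod_self] at hval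
      rw [decide_eq_false (show ¬(n - 1 < k) by omega), decide_eq_true (show 0 < k by omega)]
        at hval
      exact Bool.false_ne_true hval
    omega
  obtain ⟨G0, hov, hmod, hinj, hsurj⟩ := exists_G src dst ρ hρ conn hcard2
  have hce : Fintype.card (WordE n k) = n.choose k := card_weight_eq n k
  rw [hce] at hmod hinj hsurj
  refine ⟨fun a => (G0 a).1, fun a => (G0 a).2, ?_, fun a => congrArg Subtype.val (hmod a),
    fun a b ha hb h => hinj a b ha hb (Subtype.ext h), ?_⟩
  · intro a i hi
    have h := congrFun (hov a) ⟨i, hi⟩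
    rw [hsrc_def, hdst_def] at h
    exact h
  · intro w hw
    obtain ⟨a, ha, hGa⟩ := hsurj ⟨w, hw⟩
    exact ⟨a, ha, congrArg Subtype.val hGa⟩

end Main


/-- For `n ≥ 1`, `1 ≤ k ≤ n - 1`, `1 ≤ s ≤ n - 2` with `gcd n s = 1`, there exists an
`s`-overlap cycle of all binary words of length `n` with exactly `k` ones:
a cyclic binary sequence of length `(n choose k) * (n - s)` whose windows at starting
positions `t * (n - s)` enumerate, without repetition, exactly the binary words of
length `n` with exactly `k` coordinates equal to `true`. -/
theorem exists_s_overlap_cycle_ksubsets (n k s : ℕ) (hn : 1 ≤ n)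
    (hk1 : 1 ≤ k) (hk2 : k ≤ n - 1) (hs1 : 1 ≤ s) (hs2 : s ≤ n - 2)
    (hgcd : Nat.gcd n s = 1) :
    ∃ f : ZMod (n.choose k * (n - s)) → Bool,
      Function.Injective
        (fun t : Fin (n.choose k) => fun j : Fin n =>
          f ((((t : ℕ) * (n - s) : ℕ) : ZMod (n.choose k * (n - s)))
              + ((j : ℕ) : ZMod (n.choose k * (n - s))))) ∧
      Set.range
        (fun t : Fin (n.choose k) => fun j : Fin n =>
          f ((((t : ℕ) * (n - s) : ℕ) : ZMod (n.choose k * (n - s)))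
              + ((j : ℕ) : ZMod (n.choose k * (n - s))))) =
        {w : Fin n → Bool | weight w = k} := by
  classical
  have hn2 : 2 ≤ n := by omega
  have hkn : k < n := by omega
  have hsn2 : s + 2 ≤ n := by omega
  have mpos : 0 < n - s := by omega
  have Cpos : 0 < n.choose k := Nat.choose_pos (le_of_lt hkn)
  have Npos : 0 < n.choose k * (n - s) := Nat.mul_pos Cpos mpos
  haveI : NeZero (n.choose k * (n - s)) := ⟨by omega⟩
  obtain ⟨G, hwt, hov, hmod, hinj, hsurj⟩ := exists_word_cycle n k s hn2 hk1 hkn hs1 hsn2 hgcd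
  -- ℕ-indexed version of G
  set H : ℕ → ℕ → Bool := fun a x => if h : x < n then G a ⟨x, h⟩ else false with hH_def
  have hH : ∀ a (j : Fin n), H a j.val = G a j := by
    intro a j
    simp only [hH_def]
    rw [dif_pos j.isLt]
  have hovH : ∀ a i, i < s → H a ((n - s) + i) = H (a+1) i := by
    intro a i hi
    have h := hov a i hi
    simp only [hH_def]
    rw [dif_pos (show (n - s) + i < n by omega), dif_pos (show i < n by omega)]
    exact h
  have hmodH : ∀ a x, H (a % n.choose k) x = H a x := by
    intro a x
    simp only [hH_def, hmod a]
  -- telescoping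
  have tel : ∀ (j : ℕ), j < n → ∀ t, H (t + j / (n - s)) (j % (n - s)) = H t j := by
    intro j
    induction j using Nat.strong_induction_on with
    | _ j ih =>
      intro hjn t
      by_cases hjm : j < n - s
      · rw [Nat.div_eq_of_lt hjm, Nat.mod_eq_of_lt hjm, Nat.add_zero]
      · rw [Nat.div_eq_sub_div mpos (by omega), Nat.mod_eq_sub_mod (by omega)]
        have h1 := ih (j - (n - s)) (by omega) (by omega) (t+1)
        rw [show t + ((j - (n - s)) / (n - s) + 1) = (t+1) + (j - (n - s)) / (n - s) by omega,
          h1]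
        have h2 := hovH t (j - (n - s)) (by omega)
        rw [show (n - s) + (j - (n - s)) = j by omega] at h2
        exact h2.symm
  -- the cyclic sequence
  refine ⟨fun p => H (p.val / (n - s)) (p.val % (n - s)), ?_, ?_⟩ <;>
  · have win : ∀ (t j : ℕ), j < n →
        H ((((t * (n - s) : ℕ) : ZMod (n.choose k * (n - s)))
            + ((j : ℕ) : ZMod (n.choose k * (n - s)))).val / (n - s))
          ((((t * (n - s) : ℕ) : ZMod (n.choose k * (n - s)))
            + ((j : ℕ) : ZMod (n.choose k * (n - s)))).val % (n - s)) = H t j := by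
      intro t j hj
      have hcast : (((t * (n - s) : ℕ) : ZMod (n.choose k * (n - s)))
          + ((j : ℕ) : ZMod (n.choose k * (n - s))))
          = ((t * (n - s) + j : ℕ) : ZMod (n.choose k * (n - s))) := by push_cast; ring
      rw [hcast, ZMod.val_natCast]
      have e1 : (t * (n - s) + j) % (n.choose k * (n - s)) / (n - s)
          = ((t * (n - s) + j) / (n - s)) % n.choose k := by
        rw [Nat.mul_comm (n.choose k) (n - s), Nat.mod_mul_right_div_self]
      have e2 : (t * (n - s) + j) % (n.choose k * (n - s)) % (n - s) = j % (n - s) := by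
        rw [Nat.mul_comm (n.choose k) (n - s), Nat.mod_mul_right_mod,
          Nat.mul_comm t (n - s), Nat.mul_add_mod]
      have e3 : (t * (n - s) + j) / (n - s) = t + j / (n - s) := by
        rw [Nat.add_comm (t * (n - s)) j, Nat.add_mul_div_right _ _ mpos, Nat.add_comm]
      rw [e1, e2, e3, hmodH, tel j hj t]
    have weq : (fun t : Fin (n.choose k) => fun j : Fin n =>
        (fun p : ZMod (n.choose k * (n - s)) => H (p.val / (n - s)) (p.val % (n - s)))
          ((((t : ℕ) * (n - s) : ℕ) : ZMod (n.choose k * (n - s)))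
            + ((j : ℕ) : ZMod (n.choose k * (n - s)))))
        = fun t : Fin (n.choose k) => G (t : ℕ) := by
      funext t j
      show H _ _ = G (t : ℕ) j
      rw [win (t : ℕ) (j : ℕ) j.isLt, hH]
    rw [weq]
    first
    | · -- injectivity
        intro t t' h
        apply Fin.ext
        exact hinj _ _ t.isLt t'.isLt h
    | · -- range
        ext w
        simp only [Set.mem_range, Set.mem_setOf_eq]
        constructor
        · rintro ⟨t, rfl⟩
          exact hwt (t : ℕ)
        · intro hw
          obtain ⟨a, ha, hGa⟩ := hsurj w hw
          exact ⟨⟨a, ha⟩, hGa⟩
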